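/- Let F be a subfield of ℝ, let q ∈ F be nonzero, and let a, b, c ∈ F satisfy b² − 4·a·c·q < 0 (as real numbers). Then the quadratic form f = a·x² + b·x·y + c·y² is irreducible in the quantum plane O_q(F²). -/

import Mathlib

noncomputable section

/-- The defining relation of the quantum plane: `y * x = q • (x * y)`. -/
inductive QRel (F : Type) [Field F] (q : F) :
    FreeAlgebra F (Fin 2) → FreeAlgebra F (Fin 2) → Prop
  | rel : QRel F q (FreeAlgebra.ι F 1 * FreeAlgebra.ι F 0)
      (q • (FreeAlgebra.ι F 0 * FreeAlgebra.ι F 1))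

/-- The quantum plane `O_q(F²)`. -/
abbrev QPlane (F : Type) [Field F] (q : F) : Type := RingQuot (QRel F q)

/-- The generator `x` of the quantum plane. -/
def Qx (F : Type) [Field F] (q : F) : QPlane F q :=
  RingQuot.mkAlgHom F (QRel F q) (FreeAlgebra.ι F 0)

/-- The generator `y` of the quantum plane. -/
def Qy (F : Type) [Field F] (q : F) : QPlane F q :=
  RingQuot.mkAlgHom F (QRel F q) (FreeAlgebra.ι F 1)

/-- An element of the quantum plane is constant if it is in the image of the
structure map `F → O_q(F²)`. -/
def IsConstQP (F : Type) [Field F] (q : F) (f : QPlane F q) : Prop :=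
  f ∈ Set.range (algebraMap F (QPlane F q))

/-- A (nonzero) element is reducible if it is a product of two nonconstant elements. -/
def IsReducibleQP (F : Type) [Field F] (q : F) (f : QPlane F q) : Prop :=
  ∃ g h : QPlane F q, ¬ IsConstQP F q g ∧ ¬ IsConstQP F q h ∧ f = g * h

/-- An element is irreducible if it is nonconstant and not reducible. -/
def IsIrreducibleQP (F : Type) [Field F] (q : F) (f : QPlane F q) : Prop :=
  ¬ IsConstQP F q f ∧ ¬ IsReducibleQP F q f

namespace QAux

variable {F : Type} [Field F] (q : F)

lemma qyx : Qy F q * Qx F q = q • (Qx F q * Qy F q) := by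
  have h := RingQuot.mkAlgHom_rel F (QRel.rel (F := F) (q := q))
  simpa [Qx, Qy, map_mul, map_smul] using h

/-- the monomial x^i y^j -/
def monQ (p : ℕ × ℕ) : QPlane F q := Qx F q ^ p.1 * Qy F q ^ p.2

lemma qy_xpow (i : ℕ) : Qy F q * Qx F q ^ i = q ^ i • (Qx F q ^ i * Qy F q) := by
  induction i with
  | zero => simp
  | succ n ih =>
    rw [pow_succ, ← mul_assoc, ih, smul_mul_assoc, mul_assoc, qyx, mul_smul_comm,
      smul_smul, pow_succ]
    ring_nf
    rw [mul_assoc]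

lemma qypow_xpow (j i : ℕ) :
    Qy F q ^ j * Qx F q ^ i = q ^ (i * j) • (Qx F q ^ i * Qy F q ^ j) := by
  induction j with
  | zero => simp
  | succ n ih =>
    rw [pow_succ, mul_assoc, qy_xpow, mul_smul_comm, ← mul_assoc, ih, smul_mul_assoc,
      smul_smul, ← pow_add, mul_assoc, ← pow_succ, Nat.mul_succ, Nat.add_comm i (i*n)]

lemma mon_mul (p r : ℕ × ℕ) :
    monQ q p * monQ q r = q ^ (p.2 * r.1) • monQ q (p.1 + r.1, p.2 + r.2) := by
  unfold monQ
  rw [mul_assoc, ← mul_assoc (Qy F q ^ p.2), qypow_xpow, mul_comm r.1 p.2, smul_mul_assoc,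
    mul_smul_comm]
  simp [pow_add, mul_assoc]

end QAux

namespace QAux

variable {F : Type} [Field F] (q : F)

/-- The module on which the quantum plane is represented. -/
abbrev VQ (F : Type) [Field F] : Type := (ℕ × ℕ) →₀ F

/-- The operator `x`: shift the first index. -/
def Xop : VQ F →ₗ[F] VQ F := Finsupp.lmapDomain F F (fun p => (p.1 + 1, p.2))

/-- The operator `y`: shift the second index and twist by a power of `q`. -/
def Yop : VQ F →ₗ[F] VQ F :=
  Finsupp.lsum F (fun p => q ^ p.1 • Finsupp.lsingle (p.1, p.2 + 1))

@[simp] lemma Xop_single (p : ℕ × ℕ) (v : F) :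
    Xop (Finsupp.single p v) = Finsupp.single (p.1 + 1, p.2) v := by
  simp [Xop, Finsupp.lmapDomain, Finsupp.mapDomain_single]

@[simp] lemma Yop_single (p : ℕ × ℕ) (v : F) :
    Yop q (Finsupp.single p v) = q ^ p.1 • Finsupp.single (p.1, p.2 + 1) v := by
  simp [Yop, Finsupp.lsum_single]

lemma op_rel : Yop q * Xop = q • ((Xop : VQ F →ₗ[F] VQ F) * Yop q) := by
  refine Finsupp.lhom_ext (fun p v => ?_)
  simp only [Module.End.mul_apply, LinearMap.smul_apply, Xop_single, Yop_single,
    map_smul, smul_smul]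
  rw [pow_succ, mul_comm]

/-- The representation of the quantum plane on `VQ`. -/
def rep : QPlane F q →ₐ[F] Module.End F (VQ F) :=
  RingQuot.liftAlgHom F ⟨FreeAlgebra.lift F ![Xop, Yop q], by
    rintro x y ⟨⟩
    simp only [map_mul, map_smul, FreeAlgebra.lift_ι_apply]
    show Yop q * Xop = q • ((Xop : VQ F →ₗ[F] VQ F) * Yop q)
    exact op_rel q⟩

@[simp] lemma rep_Qx : rep q (Qx F q) = (Xop : VQ F →ₗ[F] VQ F) := by
  simp [rep, Qx, RingQuot.liftAlgHom_mkAlgHom_apply, FreeAlgebra.lift_ι_apply]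

@[simp] lemma rep_Qy : rep q (Qy F q) = Yop q := by
  simp [rep, Qy, RingQuot.liftAlgHom_mkAlgHom_apply, FreeAlgebra.lift_ι_apply]

/-- The linear map realizing the normal form of an element of the quantum plane. -/
def psi : QPlane F q →ₗ[F] VQ F where
  toFun g := rep q g (Finsupp.single (0, 0) 1)
  map_add' g h := by simp [map_add]
  map_smul' s g := by simp [map_smul]

lemma psi_apply (g : QPlane F q) : psi q g = rep q g (Finsupp.single (0, 0) 1) := rfl

@[simp] lemma psi_mon (p : ℕ × ℕ) : psi q (monQ q p) = Finsupp.single p 1 := by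
  have hy : ∀ j : ℕ, (Yop q ^ j) (Finsupp.single ((0 : ℕ), (0 : ℕ)) (1 : F))
      = Finsupp.single (0, j) 1 := by
    intro j
    induction j with
    | zero => simp
    | succ n ih => rw [pow_succ', Module.End.mul_apply, ih]; simp
  have hx : ∀ (i : ℕ) (w : VQ F) , (Xop ^ i) w = w.mapDomain (fun p => (p.1 + i, p.2)) := by
    intro i
    induction i with
    | zero =>
      intro w
      rw [pow_zero, Module.End.one_apply,
        show (fun p : ℕ × ℕ => (p.1 + 0, p.2)) = id by funext p; simp,
        Finsupp.mapDomain_id]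
    | succ n ih =>
      intro w
      rw [pow_succ', Module.End.mul_apply, ih w]
      rw [show Xop (w.mapDomain fun p => (p.1 + n, p.2))
          = (w.mapDomain fun p => (p.1 + n, p.2)).mapDomain (fun p => (p.1 + 1, p.2)) from rfl,
        ← Finsupp.mapDomain_comp]
      congr 1
  rw [psi_apply, monQ, map_mul, map_pow, map_pow, rep_Qx, rep_Qy, Module.End.mul_apply,
    hy, hx]
  simp

/-- The inverse linear map, sending `single p a` to `a • monQ p`. -/
def theta : VQ F →ₗ[F] QPlane F q :=
  Finsupp.lsum F (fun p => LinearMap.toSpanSingleton F _ (monQ q p))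

@[simp] lemma theta_single (p : ℕ × ℕ) (v : F) :
    theta q (Finsupp.single p v) = v • monQ q p := by
  simp [theta, Finsupp.lsum_single, LinearMap.toSpanSingleton_apply]

end QAux

namespace QAux

variable {F : Type} [Field F] (q : F)

lemma mem_span_mon (g : QPlane F q) : g ∈ Submodule.span F (Set.range (monQ q)) := by
  set M := Submodule.span F (Set.range (monQ q)) with hM
  have hmon : ∀ p : ℕ × ℕ, monQ q p ∈ M := fun p => Submodule.subset_span ⟨p, rfl⟩
  have hmul : ∀ u ∈ M, ∀ v ∈ M, u * v ∈ M := by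
    intro u hu
    induction hu using Submodule.span_induction with
    | mem u hu =>
      obtain ⟨p, rfl⟩ := hu
      intro v hv
      induction hv using Submodule.span_induction with
      | mem v hv =>
        obtain ⟨r, rfl⟩ := hv
        rw [mon_mul]
        exact M.smul_mem _ (hmon _)
      | zero => simpa using M.zero_mem
      | add v w _ _ hv hw => rw [mul_add]; exact M.add_mem hv hw
      | smul s v _ hv => rw [mul_smul_comm]; exact M.smul_mem _ hv
    | zero => intro v hv; simpa using M.zero_mem
    | add u w _ _ hu hw => intro v hv; rw [add_mul]; exact M.add_mem (hu v hv) (hw v hv)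
    | smul s u _ hu => intro v hv; rw [smul_mul_assoc]; exact M.smul_mem _ (hu v hv)
  obtain ⟨w, rfl⟩ := RingQuot.mkAlgHom_surjective F (QRel F q) g
  induction w using FreeAlgebra.induction with
  | grade0 r =>
    rw [AlgHom.commutes]
    have h1 : (1 : QPlane F q) ∈ M := by
      simpa [monQ] using hmon (0, 0)
    simpa [Algebra.algebraMap_eq_smul_one] using M.smul_mem r h1
  | grade1 i =>
    fin_cases i
    · simpa [monQ, Qx] using hmon (1, 0)
    · simpa [monQ, Qy] using hmon (0, 1)
  | mul u v hu hv => rw [map_mul]; exact hmul _ hu _ hv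
  | add u v hu hv => rw [map_add]; exact M.add_mem hu hv

lemma theta_psi (g : QPlane F q) : theta q (psi q g) = g := by
  induction mem_span_mon q g using Submodule.span_induction with
  | mem u hu => obtain ⟨p, rfl⟩ := hu; rw [psi_mon, theta_single, one_smul]
  | zero => simp
  | add u v _ _ hu hv => rw [map_add, map_add, hu, hv]
  | smul s u _ hu => rw [map_smul, map_smul, hu]

lemma psi_injective : Function.Injective (psi q (F := F)) := by
  intro u v h
  rw [← theta_psi q u, ← theta_psi q v, h]

end QAux

namespace QAux

variable {F : Type} [Field F] (q : F)

/-- The "deg-lex" encoding of a monomial exponent. -/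
def Ef (p : ℕ × ℕ) : ℕ ×ₗ ℕ := toLex (p.1 + p.2, p.1)

lemma top_unique {p r P Q : ℕ × ℕ} (h1 : Ef p ≤ Ef P) (h2 : Ef r ≤ Ef Q)
    (e1 : p.1 + r.1 = P.1 + Q.1) (e2 : p.2 + r.2 = P.2 + Q.2) : p = P ∧ r = Q := by
  simp only [Ef, Prod.Lex.le_iff, ofLex_toLex] at h1 h2
  exact ⟨Prod.ext (by omega) (by omega), Prod.ext (by omega) (by omega)⟩

lemma theta_apply (c : VQ F) : theta q c = c.sum fun p v => v • monQ q p := by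
  rw [theta, Finsupp.lsum_apply]
  rfl

lemma psi_smul_mon_mul (s t : F) (p r : ℕ × ℕ) :
    psi q ((s • monQ q p) * (t • monQ q r))
      = Finsupp.single (p.1 + r.1, p.2 + r.2) (s * t * q ^ (p.2 * r.1)) := by
  rw [smul_mul_assoc, mul_smul_comm, mon_mul, map_smul, map_smul, map_smul, psi_mon]
  rw [smul_smul, smul_smul, Finsupp.smul_single', mul_one]

lemma psi_mul (g h : QPlane F q) :
    psi q (g * h) = (psi q g).sum fun p ap => (psi q h).sum fun r br =>
      Finsupp.single (p.1 + r.1, p.2 + r.2) (ap * br * q ^ (p.2 * r.1)) := by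
  conv_lhs => rw [← theta_psi q g, ← theta_psi q h, theta_apply, theta_apply]
  rw [Finsupp.sum_mul, map_finsuppSum]
  refine Finsupp.sum_congr fun p hp => ?_
  rw [Finsupp.mul_sum, map_finsuppSum]
  exact Finsupp.sum_congr fun r hr => psi_smul_mon_mul q _ _ p r

lemma psi_mul_apply_top (g h : QPlane F q) (P Q : ℕ × ℕ)
    (hP : P ∈ (psi q g).support) (hQ : Q ∈ (psi q h).support)
    (hPm : ∀ p ∈ (psi q g).support, Ef p ≤ Ef P)
    (hQm : ∀ r ∈ (psi q h).support, Ef r ≤ Ef Q) :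
    psi q (g * h) (P.1 + Q.1, P.2 + Q.2) = psi q g P * psi q h Q * q ^ (P.2 * Q.1) := by
  classical
  rw [psi_mul, Finsupp.sum_apply, Finsupp.sum, Finset.sum_eq_single_of_mem P hP]
  · rw [Finsupp.sum_apply, Finsupp.sum, Finset.sum_eq_single_of_mem Q hQ]
    · rw [Finsupp.single_apply, if_pos rfl]
    · intro r hr hrQ
      rw [Finsupp.single_apply, if_neg]
      intro hc
      injection hc with hc1 hc2
      exact hrQ (top_unique (le_refl (Ef P)) (hQm r hr) hc1 hc2).2
  · intro p hp hpP
    rw [Finsupp.sum_apply, Finsupp.sum]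
    apply Finset.sum_eq_zero
    intro r hr
    rw [Finsupp.single_apply, if_neg]
    intro hc
    injection hc with hc1 hc2
    exact hpP (top_unique (hPm p hp) (hQm r hr) hc1 hc2).1

lemma finsupp_three (c : VQ F) (hc : ∀ p ∈ c.support, p.1 + p.2 ≤ 1) :
    c = Finsupp.single (0, 0) (c (0, 0)) + Finsupp.single (1, 0) (c (1, 0))
      + Finsupp.single (0, 1) (c (0, 1)) := by
  classical
  ext pt
  rcases pt with ⟨u, v⟩
  rw [Finsupp.add_apply, Finsupp.add_apply, Finsupp.single_apply, Finsupp.single_apply,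
    Finsupp.single_apply]
  by_cases huv : u + v ≤ 1
  · have : (u = 0 ∧ v = 0) ∨ (u = 1 ∧ v = 0) ∨ (u = 0 ∧ v = 1) := by omega
    rcases this with ⟨rfl, rfl⟩ | ⟨rfl, rfl⟩ | ⟨rfl, rfl⟩ <;> simp [Prod.ext_iff]
  · have hz : c (u, v) = 0 := by
      by_contra hne
      exact huv (hc (u, v) (Finsupp.mem_support_iff.mpr hne))
    rw [hz, if_neg (by intro hc'; injection hc' with a b; omega),
      if_neg (by intro hc'; injection hc' with a b; omega),
      if_neg (by intro hc'; injection hc' with a b; omega)]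
    simp

end QAux


set_option synthInstance.maxHeartbeats 1000000 in
set_option maxHeartbeats 2000000 in
open QAux in
theorem stmt_13 (F : Subfield ℝ) (q a b c : F) (hq : q ≠ 0)
    (hdisc : (b : ℝ) ^ 2 - 4 * (a : ℝ) * (c : ℝ) * (q : ℝ) < 0) :
    IsIrreducibleQP F q
      (a • (Qx F q ^ 2) + b • (Qx F q * Qy F q) + c • (Qy F q ^ 2)) := by
  rw [IsIrreducibleQP, IsReducibleQP]

  classical
  set f : QPlane F q := a • (Qx F q ^ 2) + b • (Qx F q * Qy F q) + c • (Qy F q ^ 2) with hfdef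
  have hfmon : f = a • monQ q (2, 0) + b • monQ q (1, 1) + c • monQ q (0, 2) := by
    simp [hfdef, monQ]
  have psi_f : psi q f = Finsupp.single ((2:ℕ), (0:ℕ)) a + Finsupp.single (1, 1) b
      + Finsupp.single (0, 2) c := by
    rw [hfmon, map_add, map_add, map_smul, map_smul, map_smul, psi_mon, psi_mon, psi_mon,
      Finsupp.smul_single', Finsupp.smul_single', Finsupp.smul_single', mul_one, mul_one, mul_one]
  constructor
  · rintro ⟨r, hr⟩
    have hpsi : psi q f = Finsupp.single ((0:ℕ), (0:ℕ)) r := by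
      rw [← hr, psi_apply, AlgHom.commutes, Module.algebraMap_end_apply, Finsupp.smul_single',
        mul_one]
    have ha : a = 0 := by
      have h20 := DFunLike.congr_fun hpsi ((2:ℕ), (0:ℕ))
      rw [psi_f] at h20
      simpa [Finsupp.single_apply, Prod.ext_iff] using h20
    rw [ha] at hdisc
    push_cast at hdisc
    nlinarith [sq_nonneg (b : ℝ)]
  · rintro ⟨g, h, hg, hh, hf⟩
    have hg0 : g ≠ 0 := fun e => hg ⟨0, by simp [e]⟩
    have hh0 : h ≠ 0 := fun e => hh ⟨0, by simp [e]⟩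
    have hcg : psi q g ≠ 0 := fun e => hg0 (by rw [← theta_psi q g, e, map_zero])
    have hch : psi q h ≠ 0 := fun e => hh0 (by rw [← theta_psi q h, e, map_zero])
    obtain ⟨P, hP, hPm⟩ := Finset.exists_max_image (psi q g).support Ef
      (Finsupp.support_nonempty_iff.mpr hcg)
    obtain ⟨Q, hQ, hQm⟩ := Finset.exists_max_image (psi q h).support Ef
      (Finsupp.support_nonempty_iff.mpr hch)
    -- a nonconstant element has a monomial of positive degree in its support
    have hpos : ∀ (u : QPlane F q), ¬ IsConstQP F q u →
        ∃ p ∈ (psi q u).support, p ≠ ((0:ℕ), (0:ℕ)) := by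
      intro u hu
      by_contra hcon
      push_neg at hcon
      apply hu
      refine ⟨psi q u (0, 0), ?_⟩
      have hsingle : psi q u = Finsupp.single ((0:ℕ), (0:ℕ)) (psi q u (0, 0)) := by
        ext pt
        by_cases hpt : pt = ((0:ℕ), (0:ℕ))
        · subst hpt; simp
        · have hns : pt ∉ (psi q u).support := fun m => hpt (hcon pt m)
          rw [Finsupp.notMem_support_iff.mp hns, Finsupp.single_apply,
            if_neg (fun e => hpt e.symm)]
      rw [Algebra.algebraMap_eq_smul_one]
      conv_rhs => rw [← theta_psi q u, hsingle, theta_single]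
      rw [show monQ q ((0:ℕ), (0:ℕ)) = (1 : QPlane F q) from by simp [monQ]]
    obtain ⟨p0, hp0s, hp0⟩ := hpos g hg
    obtain ⟨r0, hr0s, hr0⟩ := hpos h hh
    have hPpos : 1 ≤ P.1 + P.2 := by
      have h1 := hPm p0 hp0s
      simp only [Ef, Prod.Lex.le_iff, ofLex_toLex] at h1
      rcases p0 with ⟨u, v⟩
      simp only [ne_eq, Prod.mk.injEq, not_and] at hp0
      by_contra hP0
      have huv : u = 0 ∧ v = 0 := by omega
      exact hp0 huv.1 huv.2
    have hQpos : 1 ≤ Q.1 + Q.2 := by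
      have h1 := hQm r0 hr0s
      simp only [Ef, Prod.Lex.le_iff, ofLex_toLex] at h1
      rcases r0 with ⟨u, v⟩
      simp only [ne_eq, Prod.mk.injEq, not_and] at hr0
      by_contra hQ0
      have huv : u = 0 ∧ v = 0 := by omega
      exact hr0 huv.1 huv.2
    have htop := psi_mul_apply_top q g h P Q hP hQ hPm hQm
    have hne : psi q f (P.1 + Q.1, P.2 + Q.2) ≠ 0 := by
      rw [hf, htop]
      exact mul_ne_zero (mul_ne_zero (Finsupp.mem_support_iff.mp hP)
        (Finsupp.mem_support_iff.mp hQ)) (pow_ne_zero _ hq)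
    have hsum2 : P.1 + Q.1 + (P.2 + Q.2) = 2 := by
      by_contra hs
      apply hne
      rw [psi_f, Finsupp.add_apply, Finsupp.add_apply, Finsupp.single_apply,
        Finsupp.single_apply, Finsupp.single_apply,
        if_neg (fun e => by rw [Prod.mk.injEq] at e; exact hs (by omega)),
        if_neg (fun e => by rw [Prod.mk.injEq] at e; exact hs (by omega)),
        if_neg (fun e => by rw [Prod.mk.injEq] at e; exact hs (by omega))]
      simp
    -- supports are contained in degree ≤ 1 monomials
    have hdegP : P.1 + P.2 = 1 := by omega
    have hdegQ : Q.1 + Q.2 = 1 := by omega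
    have hsupg : ∀ p ∈ (psi q g).support, p.1 + p.2 ≤ 1 := by
      intro p hp
      have h1 := hPm p hp
      simp only [Ef, Prod.Lex.le_iff, ofLex_toLex] at h1
      omega
    have hsuph : ∀ p ∈ (psi q h).support, p.1 + p.2 ≤ 1 := by
      intro p hp
      have h1 := hQm p hp
      simp only [Ef, Prod.Lex.le_iff, ofLex_toLex] at h1
      omega
    set γ := psi q g (0, 0)
    set α := psi q g (1, 0)
    set β := psi q g (0, 1)
    set γ' := psi q h (0, 0)
    set α' := psi q h (1, 0)
    set β' := psi q h (0, 1)
    have hgexp : g = γ • monQ q (0, 0) + α • monQ q (1, 0) + β • monQ q (0, 1) := by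
      rw [← theta_psi q g, finsupp_three (psi q g) hsupg]
      simp only [map_add, theta_single]
      rfl
    have hhexp : h = γ' • monQ q (0, 0) + α' • monQ q (1, 0) + β' • monQ q (0, 1) := by
      rw [← theta_psi q h, finsupp_three (psi q h) hsuph]
      simp only [map_add, theta_single]
      rfl
    have hmul9 : psi q (g * h) =
        Finsupp.single ((0:ℕ), (0:ℕ)) (γ * γ' * q ^ 0)
        + Finsupp.single (1, 0) (γ * α' * q ^ 0) + Finsupp.single (0, 1) (γ * β' * q ^ 0)
        + (Finsupp.single (1, 0) (α * γ' * q ^ 0)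
        + Finsupp.single (2, 0) (α * α' * q ^ 0) + Finsupp.single (1, 1) (α * β' * q ^ 0))
        + (Finsupp.single (0, 1) (β * γ' * q ^ 0)
        + Finsupp.single (1, 1) (β * α' * q ^ 1) + Finsupp.single (0, 2) (β * β' * q ^ 0)) := by
    -- expand the product
      conv_lhs => rw [hgexp, hhexp]
      rw [add_mul, add_mul, mul_add, mul_add, mul_add, mul_add, mul_add, mul_add]
      rw [map_add, map_add, map_add, map_add, map_add, map_add, map_add, map_add]
      rw [psi_smul_mon_mul, psi_smul_mon_mul, psi_smul_mon_mul, psi_smul_mon_mul,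
        psi_smul_mon_mul, psi_smul_mon_mul, psi_smul_mon_mul, psi_smul_mon_mul,
        psi_smul_mon_mul]
      norm_num
    have hpsieq : psi q f = psi q (g * h) := by rw [hf]
    rw [psi_f, hmul9] at hpsieq
    have e20 := DFunLike.congr_fun hpsieq ((2:ℕ), (0:ℕ))
    have e11 := DFunLike.congr_fun hpsieq ((1:ℕ), (1:ℕ))
    have e02 := DFunLike.congr_fun hpsieq ((0:ℕ), (2:ℕ))
    simp [Finsupp.single_apply, Prod.ext_iff] at e20 e11 e02
    -- transfer to ℝ and contradict the discriminant
    have ea : (a : ℝ) = (α : ℝ) * (α' : ℝ) := by exact_mod_cast congrArg (fun z : F => (z : ℝ)) e20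
    have eb : (b : ℝ) = (α : ℝ) * (β' : ℝ) + (β : ℝ) * (α' : ℝ) * (q : ℝ) := by
      exact_mod_cast congrArg (fun z : F => (z : ℝ)) e11
    have ec : (c : ℝ) = (β : ℝ) * (β' : ℝ) := by exact_mod_cast congrArg (fun z : F => (z : ℝ)) e02
    rw [ea, eb, ec] at hdisc
    nlinarith [sq_nonneg ((α : ℝ) * (β' : ℝ) - (β : ℝ) * (α' : ℝ) * (q : ℝ))]
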